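/- Let γ, δ be reals with (γ−1)(δ−1) ≥ 0 and 3/2 < γ + δ ≤ 2. Then there is no real ψ > 0 satisfying simultaneously (2 − γ − δ)/((γ−1)(δ−1)(γ+δ−1)) < ψ and ψ < 4/(1 − 4(γ−1)(δ−1)). -/
import Mathlib


theorem no_valid_psi (γ δ : ℝ) (hprod : 0 < (γ - 1) * (δ - 1))
    (hsum1 : 3 / 2 < γ + δ) (hsum2 : γ + δ ≤ 2) :
    ¬ ∃ ψ : ℝ, 0 < ψ ∧
        (2 - γ - δ) / ((γ - 1) * (δ - 1) * (γ + δ - 1)) < ψ ∧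
        ψ < 4 / (1 - 4 * (γ - 1) * (δ - 1)) := by
  rintro ⟨ψ, hψ0, h1, h2⟩
  have hg : γ < 1 ∧ δ < 1 := by
    rcases mul_pos_iff.mp hprod with ⟨ha, hb⟩ | ⟨ha, hb⟩
    · exfalso; linarith
    · constructor <;> linarith
  obtain ⟨hg1, hd1⟩ := hg
  -- p = (γ-1)(δ-1) ≤ ((2-γ-δ)/2)^2 < 1/16
  have hp : (γ - 1) * (δ - 1) ≤ ((2 - γ - δ) / 2) ^ 2 := by nlinarith [sq_nonneg (γ - δ)]
  have hsmall : 2 - γ - δ < 1 / 2 := by linarith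
  have hp16 : (γ - 1) * (δ - 1) < 1 / 16 := by nlinarith
  have hden1 : 0 < (γ - 1) * (δ - 1) * (γ + δ - 1) := by
    apply mul_pos hprod; linarith
  have hden2 : (0:ℝ) < 1 - 4 * (γ - 1) * (δ - 1) := by nlinarith
  have h1' : 2 - γ - δ < ψ * ((γ - 1) * (δ - 1) * (γ + δ - 1)) :=
    (div_lt_iff₀ hden1).mp h1
  have h2' : ψ * (1 - 4 * (γ - 1) * (δ - 1)) < 4 :=
    (lt_div_iff₀ hden2).mp h2
  nlinarith [mul_lt_mul_of_pos_right h1' hden2, mul_lt_mul_of_pos_right h2' hden1,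
    mul_pos hprod hden1, sq_nonneg (γ - δ)]
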